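/- arXiv:2208.02637 — 4 statements merged into one kernel-verified Lean document; each statement's English description precedes it below -/
import Mathlib

section
/- Let d ≥ 1 be an integer and p ∈ [0, 1). Then there exists a Lebesgue measurable set E ⊆ ℝ^d such that |E ∩ (m + [0,1]^d)| ≥ p for all m ∈ ℤ^d, and E contains no set of the form x + ℕ·Δ = {x + n·Δ : n ∈ ℕ} with x ∈ ℝ^d and Δ ∈ ℝ^d \ {0} (i.e., E contains no infinite arithmetic progression in ℝ^d). -/
open MeasureTheory Filter

private lemma exists_fract_lt {α : ℝ} (hα : Irrational α) (y : ℝ) {ε : ℝ} (hε : 0 < ε) :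
    ∃ n : ℕ, Int.fract (y + n * α) < ε := by
  classical
  -- Step 1: find `s = k + m * α ∈ (0, min ε 1)` with `m ≠ 0`.
  obtain ⟨k, m, hm, hs0, hs1, hsε⟩ :
      ∃ (k m : ℤ), m ≠ 0 ∧ 0 < (k : ℝ) + m * α ∧ (k : ℝ) + m * α < 1 ∧ (k : ℝ) + m * α < ε := by
    have hdense : Dense ((AddSubgroup.closure ({1, α} : Set ℝ) : Set ℝ)) := by
      rcases AddSubgroup.dense_or_cyclic (AddSubgroup.closure ({1, α} : Set ℝ)) with h | ⟨a, ha⟩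
      · exact h
      · exfalso
        have h1 : (1 : ℝ) ∈ AddSubgroup.closure ({1, α} : Set ℝ) :=
          AddSubgroup.subset_closure (by simp)
        have h2 : α ∈ AddSubgroup.closure ({1, α} : Set ℝ) :=
          AddSubgroup.subset_closure (by simp)
        rw [ha, AddSubgroup.mem_closure_singleton] at h1 h2
        obtain ⟨n, hn⟩ := h1
        obtain ⟨q, hq⟩ := h2
        rw [zsmul_eq_mul] at hn hq
        have hn0 : (n : ℝ) ≠ 0 := by
          intro h0
          rw [h0, zero_mul] at hn
          norm_num at hn
        refine hα ⟨(q : ℚ) / (n : ℚ), ?_⟩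
        have ha' : a = 1 / (n : ℝ) := by field_simp at hn ⊢; linarith [hn]
        rw [← hq, ha']
        push_cast
        field_simp
    have hmin : (0:ℝ) < min ε 1 := lt_min hε one_pos
    have hne : (Set.Ioo (0 : ℝ) (min ε 1)).Nonempty :=
      ⟨min ε 1 / 2, by linarith, by linarith⟩
    obtain ⟨s, hsS, hsI⟩ := hdense.exists_mem_open isOpen_Ioo hne
    rw [show ({1, α} : Set ℝ) = {1} ∪ {α} from rfl, AddSubgroup.closure_union] at hsS
    rw [SetLike.mem_coe, AddSubgroup.mem_sup] at hsS
    obtain ⟨u, hu, v, hv, huv⟩ := hsS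
    rw [AddSubgroup.mem_closure_singleton] at hu hv
    obtain ⟨k, hk⟩ := hu
    obtain ⟨m, hmv⟩ := hv
    rw [zsmul_eq_mul, mul_one] at hk
    rw [zsmul_eq_mul] at hmv
    have hs_eq : (k : ℝ) + m * α = s := by rw [hk, hmv]; exact huv
    have hm0 : m ≠ 0 := by
      rintro rfl
      rw [Int.cast_zero, zero_mul, add_zero] at hs_eq
      have h0k : (0 : ℝ) < k := hs_eq ▸ hsI.1
      have h1k : (k : ℝ) < 1 := by
        rw [hs_eq]
        exact lt_of_lt_of_le hsI.2 (min_le_right _ _)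
      have : (0 : ℤ) < k := by exact_mod_cast h0k
      have : (1 : ℝ) ≤ (k : ℝ) := by exact_mod_cast this
      linarith
    exact ⟨k, m, hm0, hs_eq ▸ hsI.1,
      hs_eq ▸ lt_of_lt_of_le hsI.2 (min_le_right _ _),
      hs_eq ▸ lt_of_lt_of_le hsI.2 (min_le_left _ _)⟩
  set s : ℝ := (k : ℝ) + m * α with hs_def
  rcases lt_or_ge (Int.fract y) ε with hvy | hvy
  · exact ⟨0, by simpa using hvy⟩
  rcases hm.lt_or_gt with hmneg | hmpos
  · -- m < 0 : descending case
    have hmt : ((-m).toNat : ℝ) = -(m : ℝ) := by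
      rw [← Int.cast_natCast, Int.toNat_of_nonneg (by omega)]
      push_cast; ring
    have key : ∀ j : ℕ, Int.fract (y + ((j * (-m).toNat : ℕ) : ℝ) * α)
        = Int.fract (Int.fract y + -(j * s)) := by
      intro j
      have h1 : y + ((j * (-m).toNat : ℕ) : ℝ) * α
          = (Int.fract y + -(j * s)) + ((⌊y⌋ + j * k : ℤ) : ℝ) := by
        have hf : Int.fract y = y - ⌊y⌋ := (Int.self_sub_floor y).symm
        rw [hf, hs_def]
        push_cast [hmt]
        ring
      rw [h1, Int.fract_add_intCast]
    have hex : ∃ j : ℕ, Int.fract y + -(j * s) < ε := by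
      obtain ⟨j, hj⟩ := exists_nat_ge (Int.fract y / s)
      refine ⟨j, ?_⟩
      rw [div_le_iff₀ hs0] at hj
      nlinarith
    set j := Nat.find hex with hj_def
    have hj : Int.fract y + -(j * s) < ε := Nat.find_spec hex
    have hjne : j ≠ 0 := by
      intro h0
      rw [h0] at hj
      simp at hj
      linarith
    have hj' : ¬(Int.fract y + -((j - 1 : ℕ) * s) < ε) :=
      Nat.find_min hex (Nat.pred_lt hjne)
    push_neg at hj'
    have hcast : ((j : ℝ)) = ((j - 1 : ℕ) : ℝ) + 1 := by
      have := Nat.succ_pred_eq_of_pos (Nat.pos_of_ne_zero hjne)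
      exact_mod_cast (congrArg (fun n : ℕ => (n : ℝ)) this).symm
    have hlow : 0 ≤ Int.fract y + -(j * s) := by rw [hcast]; nlinarith
    have hhigh : Int.fract y + -(j * s) < 1 := by
      have h1 := Int.fract_lt_one y
      nlinarith [Nat.pos_of_ne_zero hjne, (by exact_mod_cast Nat.pos_of_ne_zero hjne : (1:ℝ) ≤ j)]
    refine ⟨j * (-m).toNat, ?_⟩
    rw [key j, Int.fract_eq_self.2 ⟨hlow, hhigh⟩]
    exact hj
  · -- m > 0 : ascending case
    have hmt : ((m.toNat : ℕ) : ℝ) = (m : ℝ) := by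
      rw [← Int.cast_natCast, Int.toNat_of_nonneg hmpos.le]
    have key : ∀ j : ℕ, Int.fract (y + ((j * m.toNat : ℕ) : ℝ) * α)
        = Int.fract (Int.fract y + j * s) := by
      intro j
      have h1 : y + ((j * m.toNat : ℕ) : ℝ) * α
          = (Int.fract y + j * s) + ((⌊y⌋ - j * k : ℤ) : ℝ) := by
        have hf : Int.fract y = y - ⌊y⌋ := (Int.self_sub_floor y).symm
        rw [hf, hs_def]
        push_cast [hmt]
        ring
      rw [h1, Int.fract_add_intCast]
    have hex : ∃ j : ℕ, 1 ≤ Int.fract y + j * s := by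
      obtain ⟨j, hj⟩ := exists_nat_ge ((1 - Int.fract y) / s)
      refine ⟨j, ?_⟩
      rw [div_le_iff₀ hs0] at hj
      nlinarith
    set j := Nat.find hex with hj_def
    have hj : 1 ≤ Int.fract y + j * s := Nat.find_spec hex
    have hjne : j ≠ 0 := by
      intro h0
      rw [h0] at hj
      simp at hj
      linarith [Int.fract_lt_one y]
    have hj' : ¬(1 ≤ Int.fract y + (j - 1 : ℕ) * s) :=
      Nat.find_min hex (Nat.pred_lt hjne)
    push_neg at hj'
    have hcast : ((j : ℝ)) = ((j - 1 : ℕ) : ℝ) + 1 := by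
      have := Nat.succ_pred_eq_of_pos (Nat.pos_of_ne_zero hjne)
      exact_mod_cast (congrArg (fun n : ℕ => (n : ℝ)) this).symm
    have hhigh : Int.fract y + j * s < 1 + s := by rw [hcast]; nlinarith
    have hval : Int.fract (Int.fract y + j * s) = Int.fract y + j * s - 1 := by
      have h2 := Int.fract_sub_intCast (Int.fract y + j * s) 1
      rw [Int.cast_one] at h2
      rw [← h2, Int.fract_eq_self.2 ⟨by linarith, by linarith⟩]
    refine ⟨j * m.toNat, ?_⟩
    rw [key j, hval]
    linarith

private def Fbad (ℓ : ℝ) : Set ℝ :=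
  (⋃ k : ℤ, Set.Icc (k : ℝ) (k + ℓ)) ∪ ⋃ k : ℤ, Set.Icc (k * Real.sqrt 2) (k * Real.sqrt 2 + ℓ)

private lemma measurableSet_Fbad (ℓ : ℝ) : MeasurableSet (Fbad ℓ) :=
  ((MeasurableSet.iUnion fun _ => measurableSet_Icc).union
    (MeasurableSet.iUnion fun _ => measurableSet_Icc))

private lemma exists_mem_Fbad {ℓ : ℝ} (hℓ : 0 < ℓ) (y Δ : ℝ) (hΔ : Δ ≠ 0) :
    ∃ n : ℕ, y + n * Δ ∈ Fbad ℓ := by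
  by_cases hir : Irrational Δ
  · obtain ⟨n, hn⟩ := exists_fract_lt hir y hℓ
    refine ⟨n, Or.inl (Set.mem_iUnion.2 ⟨⌊y + n * Δ⌋, Int.floor_le _, ?_⟩)⟩
    have h1 : y + n * Δ - ⌊y + n * Δ⌋ = Int.fract (y + n * Δ) := Int.self_sub_floor _
    linarith
  · obtain ⟨q, hq⟩ := not_not.mp hir
    have hq0 : q ≠ 0 := by rintro rfl; rw [Rat.cast_zero] at hq; exact hΔ hq.symm
    have hs2pos : (0 : ℝ) < Real.sqrt 2 := Real.sqrt_pos.2 (by norm_num)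
    have hs2 : Real.sqrt 2 * Real.sqrt 2 = 2 := Real.mul_self_sqrt (by norm_num)
    have hirr : Irrational (Δ / Real.sqrt 2) := by
      rw [← hq]; exact irrational_sqrt_two.ratCast_div hq0
    obtain ⟨n, hn⟩ := exists_fract_lt hirr (y / Real.sqrt 2) (div_pos hℓ hs2pos)
    set z := y / Real.sqrt 2 + n * (Δ / Real.sqrt 2) with hz
    refine ⟨n, Or.inr (Set.mem_iUnion.2 ⟨⌊z⌋, ?_, ?_⟩)⟩
    · have h1 : (⌊z⌋ : ℝ) ≤ z := Int.floor_le z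
      have hz2 : z * Real.sqrt 2 = y + n * Δ := by
        rw [hz]; field_simp
      nlinarith
    · have h2 : z - ⌊z⌋ < ℓ / Real.sqrt 2 := by
        rw [Int.self_sub_floor]; exact hn
      have hz2 : z * Real.sqrt 2 = y + n * Δ := by
        rw [hz]; field_simp
      have h3 : (z - ⌊z⌋) * Real.sqrt 2 < (ℓ / Real.sqrt 2) * Real.sqrt 2 := by
        exact mul_lt_mul_of_pos_right h2 hs2pos
      rw [div_mul_cancel₀ _ hs2pos.ne'] at h3
      nlinarith

private lemma volume_Fbad_le {ℓ : ℝ} (hℓ0 : 0 < ℓ) (hℓ : ℓ ≤ 1 / 4) (m : ℤ) :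
    volume (Fbad ℓ ∩ Set.Icc (m : ℝ) (m + 1)) ≤ ENNReal.ofReal (3 * ℓ) := by
  have hs2 : Real.sqrt 2 * Real.sqrt 2 = 2 := Real.mul_self_sqrt (by norm_num)
  have hs2pos : (0 : ℝ) < Real.sqrt 2 := Real.sqrt_pos.2 (by norm_num)
  have hs21 : (1 : ℝ) ≤ Real.sqrt 2 := by nlinarith
  set k₀ : ℤ := ⌈((m : ℝ) - ℓ) / Real.sqrt 2⌉ with hk₀
  have hsub : Fbad ℓ ∩ Set.Icc (m : ℝ) (m + 1) ⊆
      ((Set.Icc (m : ℝ) (m + ℓ) ∪ {((m : ℝ) + 1)}) ∪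
        Set.Icc ((k₀ : ℝ) * Real.sqrt 2) ((k₀ : ℝ) * Real.sqrt 2 + ℓ)) ∪
        Set.Icc (((k₀ : ℝ) + 1) * Real.sqrt 2) (((k₀ : ℝ) + 1) * Real.sqrt 2 + ℓ) := by
    rintro t ⟨hF, htm, htm1⟩
    rcases hF with h | h
    · obtain ⟨k, hk1, hk2⟩ := Set.mem_iUnion.1 h
      have hkm : ((m : ℝ)) - 1 < (k : ℝ) := by linarith
      have hkm' : m ≤ k := by
        have : (m : ℤ) - 1 < k := by exact_mod_cast hkm
        omega
      have hkub : (k : ℝ) ≤ (m : ℝ) + 1 := le_trans hk1 htm1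
      have hkub' : k ≤ m + 1 := by exact_mod_cast hkub
      rcases eq_or_lt_of_le hkub' with heq | hlt
      · left; left; right
        have : (k : ℝ) = (m : ℝ) + 1 := by exact_mod_cast heq
        have ht1 : (m : ℝ) + 1 ≤ t := this ▸ hk1
        simp [le_antisymm htm1 ht1]
      · have hkm2 : k ≤ m := by omega
        have : (k : ℝ) ≤ (m : ℝ) := by exact_mod_cast hkm2
        exact Or.inl (Or.inl (Or.inl ⟨htm, by linarith⟩))
    · obtain ⟨k, hk1, hk2⟩ := Set.mem_iUnion.1 h
      have hklb : k₀ ≤ k := by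
        rw [hk₀]
        apply Int.ceil_le.2
        rw [div_le_iff₀ hs2pos]
        linarith
      have hkub : k ≤ k₀ + 1 := by
        by_contra hcon
        push_neg at hcon
        have h2' : k₀ + 2 ≤ k := by omega
        have h2 : ((k₀ : ℝ)) + 2 ≤ (k : ℝ) := by exact_mod_cast h2'
        have h1 : ((m : ℝ) - ℓ) / Real.sqrt 2 ≤ (k₀ : ℝ) := Int.le_ceil _
        rw [div_le_iff₀ hs2pos] at h1
        nlinarith
      rcases eq_or_lt_of_le hklb with heq | hlt
      · left; right
        have : (k₀ : ℝ) = (k : ℝ) := by exact_mod_cast heq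
        exact ⟨this ▸ hk1, this ▸ hk2⟩
      · right
        have hk₀1 : k = k₀ + 1 := by omega
        have : (k : ℝ) = (k₀ : ℝ) + 1 := by exact_mod_cast hk₀1
        exact ⟨this ▸ hk1, this ▸ hk2⟩
  calc volume (Fbad ℓ ∩ Set.Icc (m : ℝ) (m + 1)) ≤ _ := measure_mono hsub
    _ ≤ ENNReal.ofReal (3 * ℓ) := by
        refine le_trans (measure_union_le _ _) ?_
        refine le_trans (add_le_add_left (measure_union_le _ _) _) ?_
        refine le_trans (add_le_add_left (add_le_add_left (measure_union_le _ _) _) _) ?_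
        rw [Real.volume_Icc, Real.volume_Icc, Real.volume_Icc, measure_singleton]
        rw [show (m : ℝ) + ℓ - m = ℓ by ring, show (k₀ : ℝ) * Real.sqrt 2 + ℓ - k₀ * Real.sqrt 2 = ℓ by ring,
          show ((k₀ : ℝ) + 1) * Real.sqrt 2 + ℓ - ((k₀ : ℝ) + 1) * Real.sqrt 2 = ℓ by ring]
        rw [add_zero, ← ENNReal.ofReal_add hℓ0.le hℓ0.le, ← ENNReal.ofReal_add (by linarith) hℓ0.le]
        exact ENNReal.ofReal_le_ofReal (by linarith)

private lemma volume_compl_Fbad_ge {ℓ : ℝ} (hℓ0 : 0 < ℓ) (hℓ : ℓ ≤ 1 / 4) (m : ℤ) :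
    ENNReal.ofReal (1 - 3 * ℓ) ≤ volume ((Fbad ℓ)ᶜ ∩ Set.Icc (m : ℝ) (m + 1)) := by
  have hle := volume_Fbad_le hℓ0 hℓ m
  have hcover : Set.Icc (m : ℝ) (m + 1) ⊆
      ((Fbad ℓ)ᶜ ∩ Set.Icc (m : ℝ) (m + 1)) ∪ (Fbad ℓ ∩ Set.Icc (m : ℝ) (m + 1)) := by
    intro t ht
    by_cases h : t ∈ Fbad ℓ
    · exact Or.inr ⟨h, ht⟩
    · exact Or.inl ⟨h, ht⟩
  have h1 : ENNReal.ofReal 1 ≤ volume ((Fbad ℓ)ᶜ ∩ Set.Icc (m : ℝ) (m + 1)) + ENNReal.ofReal (3 * ℓ) := by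
    calc ENNReal.ofReal 1 = volume (Set.Icc (m : ℝ) (m + 1)) := by
          rw [Real.volume_Icc]; norm_num
      _ ≤ volume (((Fbad ℓ)ᶜ ∩ Set.Icc (m : ℝ) (m + 1)) ∪ (Fbad ℓ ∩ Set.Icc (m : ℝ) (m + 1))) :=
          measure_mono hcover
      _ ≤ volume ((Fbad ℓ)ᶜ ∩ Set.Icc (m : ℝ) (m + 1)) + volume (Fbad ℓ ∩ Set.Icc (m : ℝ) (m + 1)) :=
          measure_union_le _ _
      _ ≤ _ := add_le_add_right hle _
  calc ENNReal.ofReal (1 - 3 * ℓ) = ENNReal.ofReal 1 - ENNReal.ofReal (3 * ℓ) :=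
        ENNReal.ofReal_sub _ (by positivity)
    _ ≤ _ := tsub_le_iff_right.2 h1

/-- **Large sets with no infinite arithmetic progressions in `ℝ^d`.**
For every `0 ≤ p < 1` there is a measurable `E ⊆ ℝ^d` with measure at least `p` in every
integer unit cube, containing no set `{x + n • Δ : n ∈ ℕ}` with `x ∈ ℝ^d`, `Δ ≠ 0`. -/
theorem large_set_no_arithmetic_progression
    (d : ℕ) (hd : 1 ≤ d)
    (p : ℝ) (hp0 : 0 ≤ p) (hp1 : p < 1) :
    ∃ E : Set (EuclideanSpace ℝ (Fin d)), MeasurableSet E ∧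
      (∀ m : Fin d → ℤ, ENNReal.ofReal p ≤
        volume (E ∩ {x : EuclideanSpace ℝ (Fin d) |
          ∀ i : Fin d, (m i : ℝ) ≤ x i ∧ x i ≤ (m i : ℝ) + 1})) ∧
      (∀ x Δ : EuclideanSpace ℝ (Fin d), Δ ≠ 0 →
        ¬ (Set.range (fun n : ℕ => x + (n : ℝ) • Δ) ⊆ E)) := by
  have hd0 : (0 : ℝ) < d := by exact_mod_cast Nat.pos_of_ne_zero (by omega)
  have hd1 : (1 : ℝ) ≤ d := by exact_mod_cast hd
  set η : ℝ := (1 - p) / d with hη_def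
  have hη0 : 0 < η := div_pos (by linarith) hd0
  have hη1 : η ≤ 1 := by rw [hη_def, div_le_one hd0]; linarith
  set ℓ : ℝ := η / 8 with hℓ_def
  have hℓ0 : 0 < ℓ := by positivity
  have hℓ4 : ℓ ≤ 1 / 4 := by rw [hℓ_def]; linarith
  have hdη : (d : ℝ) * η = 1 - p := by rw [hη_def, mul_div_cancel₀ _ hd0.ne']
  refine ⟨(MeasurableEquiv.toLp 2 (Fin d → ℝ)).symm ⁻¹' (Set.univ.pi fun _ : Fin d => (Fbad ℓ)ᶜ),
    (MeasurableEquiv.toLp 2 (Fin d → ℝ)).symm.measurable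
      (MeasurableSet.univ_pi fun _ => (measurableSet_Fbad ℓ).compl), ?_, ?_⟩
  · intro m
    have hset : (MeasurableEquiv.toLp 2 (Fin d → ℝ)).symm ⁻¹' (Set.univ.pi fun _ : Fin d => (Fbad ℓ)ᶜ) ∩
        {x : EuclideanSpace ℝ (Fin d) | ∀ i : Fin d, (m i : ℝ) ≤ x i ∧ x i ≤ (m i : ℝ) + 1} =
        (MeasurableEquiv.toLp 2 (Fin d → ℝ)).symm ⁻¹'
          (Set.univ.pi fun i : Fin d => (Fbad ℓ)ᶜ ∩ Set.Icc ((m i : ℝ)) ((m i : ℝ) + 1)) := by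
      ext x
      simp only [Set.mem_inter_iff, Set.mem_preimage, Set.mem_pi, Set.mem_univ, true_implies,
        Set.mem_compl_iff, Set.mem_setOf_eq, Set.mem_Icc]
      constructor
      · rintro ⟨h1, h2⟩ i
        exact ⟨h1 i, h2 i⟩
      · intro h
        exact ⟨fun i => (h i).1, fun i => (h i).2⟩
    rw [hset, (EuclideanSpace.volume_preserving_symm_measurableEquiv_toLp (Fin d)).measure_preimage
      ((MeasurableSet.univ_pi fun i => (measurableSet_Fbad ℓ).compl.inter measurableSet_Icc).nullMeasurableSet),
      volume_pi_pi]
    have hbern : p ≤ (1 - η) ^ d := by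
      have := one_add_mul_le_pow (a := -η) (by linarith) d
      have h2 : 1 + (d : ℝ) * (-η) = p := by rw [mul_neg, hdη]; ring
      rw [h2] at this
      simpa [sub_eq_add_neg] using this
    calc ENNReal.ofReal p ≤ ENNReal.ofReal ((1 - η) ^ d) := ENNReal.ofReal_le_ofReal hbern
      _ = (ENNReal.ofReal (1 - η)) ^ d := ENNReal.ofReal_pow (by linarith) d
      _ = ∏ _i : Fin d, ENNReal.ofReal (1 - η) := by
          rw [Finset.prod_const, Finset.card_univ, Fintype.card_fin]
      _ ≤ ∏ i : Fin d, volume ((Fbad ℓ)ᶜ ∩ Set.Icc ((m i : ℝ)) ((m i : ℝ) + 1)) := by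
          refine Finset.prod_le_prod' fun i _ => ?_
          refine le_trans (ENNReal.ofReal_le_ofReal ?_) (volume_compl_Fbad_ge hℓ0 hℓ4 (m i))
          rw [hℓ_def]; linarith
  · intro x Δ hΔ hsub
    have hex : ∃ i, Δ i ≠ 0 := by
      by_contra hcon
      push_neg at hcon
      exact hΔ (PiLp.ext fun i => by simp [hcon i])
    obtain ⟨i, hi⟩ := hex
    obtain ⟨n, hn⟩ := exists_mem_Fbad hℓ0 (x i) (Δ i) hi
    have hmem := hsub (Set.mem_range_self n)
    rw [Set.mem_preimage, Set.mem_pi] at hmem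
    have h2 := hmem i (Set.mem_univ i)
    have h3 : (MeasurableEquiv.toLp 2 (Fin d → ℝ)).symm (x + (n : ℝ) • Δ) i = x i + n * Δ i := by
      rfl
    rw [h3] at h2
    exact h2 hn
end

section
/- Let A = {a_0 = 0 < a_1 < a_2 < ⋯} ⊆ ℝ be a strictly increasing sequence with a_0 = 0 and a_n → +∞, and let p ∈ [0, 1). Then there exists a Lebesgue measurable set E ⊆ ℝ such that no translate x + A = {x + a_n : n ∈ ℕ} (x ∈ ℝ) is contained in E, and such that |E ∩ [m, m+1]| ≥ p for every integer m ∈ ℤ. -/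
open MeasureTheory Filter ENNReal

/-- Auxiliary recursion: running bound. -/
noncomputable def recB (h : ℕ → ℝ → ℝ) : ℕ → ℝ
  | 0 => 0
  | s + 1 => max (recB h s) (h s (recB h s))

lemma recB_mono (h : ℕ → ℝ → ℝ) : Monotone (recB h) :=
  monotone_nat_of_le_succ (fun s => le_max_left _ _)

lemma recB_succ_ge (h : ℕ → ℝ → ℝ) (s : ℕ) : h s (recB h s) ≤ recB h (s + 1) :=
  le_max_right _ _

/-- **Large sets with no translate of a given unbounded sequence.**
If `a : ℕ → ℝ` is strictly increasing with `a 0 = 0` and `a n → +∞`, then for every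
`0 ≤ p < 1` there is a measurable `E ⊆ ℝ` with `|E ∩ [m, m+1]| ≥ p` for all `m ∈ ℤ`,
containing no translate `{x + a n : n ∈ ℕ}`. -/
theorem large_set_no_translate
    (a : ℕ → ℝ) (h0 : a 0 = 0) (hmono : StrictMono a)
    (htop : Tendsto a atTop atTop)
    (p : ℝ) (hp0 : 0 ≤ p) (hp1 : p < 1) :
    ∃ E : Set ℝ, MeasurableSet E ∧
      (∀ x : ℝ, ¬ (Set.range (fun n : ℕ => x + a n) ⊆ E)) ∧
      (∀ m : ℤ, ENNReal.ofReal p ≤ volume (E ∩ Set.Icc (m : ℝ) ((m : ℝ) + 1))) := by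
  set δ : ℝ := 1 - p with hδdef
  have hδ : 0 < δ := by simp [hδdef]; linarith
  -- choice of large values of `a`
  have hpick : ∀ C : ℝ, ∃ n, C ≤ a n := fun C => (htop.eventually_ge_atTop C).exists
  choose nf hnf using hpick
  -- enumeration of ℤ × ℕ
  let q : ℕ ≃ ℤ × ℕ := (Denumerable.eqv (ℤ × ℕ)).symm
  let L : ℕ → ℝ := fun s => ((q s).1 : ℝ) + (q s).2 * δ
  let h : ℕ → ℝ → ℝ := fun s b => L s + δ + a (nf (b + 2 - L s))
  let B : ℕ → ℝ := recB h
  let t : ℕ → ℝ := fun s => a (nf (B s + 2 - L s))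
  let l : ℕ → ℝ := fun s => L s + t s
  have hl : ∀ s, B s + 2 ≤ l s := by
    intro s
    have := hnf (B s + 2 - L s)
    simp only [l, t]
    linarith
  have hr : ∀ s, l s + δ ≤ B (s + 1) := by
    intro s
    have := recB_succ_ge h s
    simp only [h] at this
    simp only [l, t, B]
    linarith
  set F : Set ℝ := ⋃ s, Set.Icc (l s) (l s + δ) with hF
  have hFmeas : MeasurableSet F := MeasurableSet.iUnion (fun s => measurableSet_Icc)
  refine ⟨Fᶜ, hFmeas.compl, ?_, ?_⟩
  · -- no translate is contained in Fᶜ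
    intro x hsub
    set k : ℤ := ⌊x⌋ with hk
    have hxk : (0:ℝ) ≤ x - k := by
      have := Int.floor_le x; linarith
    set j : ℕ := (⌊(x - k) / δ⌋).toNat with hj
    have hj0 : (0:ℤ) ≤ ⌊(x - k) / δ⌋ := Int.floor_nonneg.2 (div_nonneg hxk hδ.le)
    have hjcast : ((j : ℤ) : ℝ) = ((⌊(x - k) / δ⌋ : ℤ) : ℝ) := by
      rw [hj, Int.toNat_of_nonneg hj0]
    set s : ℕ := q.symm (k, j) with hs
    have hqs : q s = (k, j) := Equiv.apply_symm_apply _ _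
    have hLs : L s = (k : ℝ) + j * δ := by simp [L, hqs]
    have h1 : (j : ℝ) * δ ≤ x - k := by
      have := Int.floor_le ((x - k) / δ)
      have h2 : ((⌊(x - k) / δ⌋ : ℤ) : ℝ) * δ ≤ x - k := by
        rw [← le_div_iff₀ hδ]; exact this
      calc (j : ℝ) * δ = ((⌊(x - k) / δ⌋ : ℤ) : ℝ) * δ := by
            rw [← hjcast]; norm_cast
        _ ≤ x - k := h2
    have h2 : x - k < ((j : ℝ) + 1) * δ := by
      have := Int.lt_floor_add_one ((x - k) / δ)
      have h3 : x - k < (((⌊(x - k) / δ⌋ : ℤ) : ℝ) + 1) * δ := by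
        rw [← div_lt_iff₀ hδ]; push_cast; linarith
      calc x - k < (((⌊(x - k) / δ⌋ : ℤ) : ℝ) + 1) * δ := h3
        _ = ((j : ℝ) + 1) * δ := by rw [← hjcast]; norm_cast
    -- the point x + t s lies in the s-th interval, hence in F
    have hmem : x + t s ∈ F := by
      apply Set.mem_iUnion.2 ⟨s, ?_⟩
      constructor
      · simp only [l]; rw [hLs]; linarith
      · simp only [l]; rw [hLs]; nlinarith
    have : x + t s ∈ Fᶜ := hsub ⟨nf (B s + 2 - L s), rfl⟩
    exact this hmem
  · -- measure estimate
    intro m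
    set J : Set ℝ := Set.Icc (m : ℝ) ((m : ℝ) + 1) with hJ
    -- at most one interval meets J
    have key : ∀ r u : ℕ, r < u → ∀ y z : ℝ,
        y ∈ Set.Icc (l u) (l u + δ) → z ∈ Set.Icc (l r) (l r + δ) →
        y ∈ J → z ∈ J → False := by
      intro r u hru y z hy hz hyJ hzJ
      have h1 : B u + 2 ≤ y := le_trans (hl u) hy.1
      have h2 : z ≤ B (r + 1) := le_trans hz.2 (hr r)
      have h3 : B (r + 1) ≤ B u := recB_mono h hru
      have h4 : y ≤ (m : ℝ) + 1 := hyJ.2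
      have h5 : (m : ℝ) ≤ z := hzJ.1
      linarith
    have hsub : ∃ s0, F ∩ J ⊆ Set.Icc (l s0) (l s0 + δ) := by
      by_cases hne : ∃ s0, (Set.Icc (l s0) (l s0 + δ) ∩ J).Nonempty
      · obtain ⟨s0, z, hzI, hzJ⟩ := hne
        refine ⟨s0, fun y ⟨hyF, hyJ⟩ => ?_⟩
        obtain ⟨s, hyI⟩ := Set.mem_iUnion.1 hyF
        rcases lt_trichotomy s s0 with hlt | heq | hgt
        · exact (key s s0 hlt z y hzI hyI hzJ hyJ).elim
        · rwa [← heq]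
        · exact (key s0 s hgt y z hyI hzI hyJ hzJ).elim
      · refine ⟨0, fun y ⟨hyF, hyJ⟩ => ?_⟩
        obtain ⟨s, hyI⟩ := Set.mem_iUnion.1 hyF
        exact (hne ⟨s, y, hyI, hyJ⟩).elim
    obtain ⟨s0, hsub⟩ := hsub
    have hFJ : volume (F ∩ J) ≤ ENNReal.ofReal δ := by
      refine (measure_mono hsub).trans ?_
      rw [Real.volume_Icc]
      simp
    have hJvol : volume J = 1 := by
      rw [hJ, Real.volume_Icc]
      simp
    have hsplit : volume (J ∩ F) + volume (J \ F) = volume J :=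
      measure_inter_add_diff J hFmeas
    have hEeq : Fᶜ ∩ J = J \ F := by
      ext y; simp [Set.mem_diff, and_comm]
    rw [hEeq]
    have hIF : volume (J ∩ F) ≤ ENNReal.ofReal δ := by
      rw [Set.inter_comm]; exact hFJ
    have h1 : (1 : ℝ≥0∞) ≤ volume (J \ F) + ENNReal.ofReal δ := by
      rw [← hJvol, ← hsplit, add_comm]
      exact add_le_add_right hIF _
    have h2 : ENNReal.ofReal p = 1 - ENNReal.ofReal δ := by
      rw [hδdef, ← ENNReal.ofReal_one, ← ENNReal.ofReal_sub _ (by linarith : (0:ℝ) ≤ 1 - p)]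
      norm_num
    rw [h2]
    exact tsub_le_iff_right.2 h1
end

section
/- Let A = {a_0 = 0 < a_1 < a_2 < ⋯} ⊆ ℝ be a strictly increasing sequence with a_0 = 0 and a_n → +∞. Then there exists a Lebesgue measurable set E ⊆ ℝ such that no translate x + A = {x + a_n : n ∈ ℕ} (x ∈ ℝ) is contained in E, and such that (−∞, 0] ⊆ E and |E ∩ [m, m+1]| → 1 as m → +∞ (over integers m). -/
open MeasureTheory Filter

noncomputable def Hsum (i : ℕ) : ℝ := ∑ k ∈ Finset.range i, (1 / (k + 1) : ℝ)

lemma Hsum_zero : Hsum 0 = 0 := by simp [Hsum]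

lemma Hsum_succ (i : ℕ) : Hsum (i + 1) = Hsum i + 1 / ((i : ℝ) + 1) := by
  simp [Hsum, Finset.sum_range_succ]

lemma Hsum_nonneg (i : ℕ) : 0 ≤ Hsum i :=
  Finset.sum_nonneg fun k _ => by positivity

lemma Hsum_mono : Monotone Hsum := by
  apply monotone_nat_of_le_succ
  intro i
  rw [Hsum_succ]
  have : (0:ℝ) ≤ 1 / ((i : ℝ) + 1) := by positivity
  linarith

lemma Hsum_tendsto : Tendsto Hsum atTop atTop :=
  Real.tendsto_sum_range_one_div_nat_succ_atTop

lemma Hsum_cover {x : ℝ} (hx : 0 ≤ x) : ∃ i, Hsum i ≤ x ∧ x ≤ Hsum (i + 1) := by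
  have hex : ∃ j, x < Hsum j := (Hsum_tendsto.eventually_gt_atTop x).exists
  cases h : Nat.find hex with
  | zero =>
      exfalso
      have := Nat.find_spec hex
      rw [h, Hsum_zero] at this
      linarith
  | succ i =>
      have hi : i < Nat.find hex := h ▸ i.lt_succ_self
      have h1 : ¬ x < Hsum i := Nat.find_min hex hi
      have h2 : x < Hsum (Nat.find hex) := Nat.find_spec hex
      rw [h] at h2
      exact ⟨i, not_lt.mp h1, h2.le⟩

noncomputable def pickIdx (a : ℕ → ℝ) (htop : Tendsto a atTop atTop) (C : ℝ) : ℕ :=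
  (htop.eventually_ge_atTop C).exists.choose

lemma pickIdx_spec (a : ℕ → ℝ) (htop : Tendsto a atTop atTop) (C : ℝ) :
    C ≤ a (pickIdx a htop C) :=
  (htop.eventually_ge_atTop C).exists.choose_spec

noncomputable def nseq (a : ℕ → ℝ) (htop : Tendsto a atTop atTop) : ℕ → ℕ
  | 0 => pickIdx a htop (Hsum 1 + 2)
  | i + 1 => pickIdx a htop (a (nseq a htop i) + Hsum (i + 1) + Hsum (i + 2) + 2)

lemma nseq_zero_spec (a : ℕ → ℝ) (htop : Tendsto a atTop atTop) :
    Hsum 1 + 2 ≤ a (nseq a htop 0) :=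
  pickIdx_spec a htop _

lemma nseq_succ_spec (a : ℕ → ℝ) (htop : Tendsto a atTop atTop) (i : ℕ) :
    a (nseq a htop i) + Hsum (i + 1) + Hsum (i + 2) + 2 ≤ a (nseq a htop (i + 1)) :=
  pickIdx_spec a htop _

/-- **A progressively denser set with no translate of a given unbounded sequence.**
If `a : ℕ → ℝ` is strictly increasing with `a 0 = 0` and `a n → +∞`, then there is a
measurable `E ⊆ ℝ` containing no translate `{x + a n : n ∈ ℕ}`, with `(-∞, 0] ⊆ E` and
`|E ∩ [m, m+1]| → 1` as the integer `m → +∞`. -/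
theorem denser_set_no_translate
    (a : ℕ → ℝ) (h0 : a 0 = 0) (hmono : StrictMono a)
    (htop : Tendsto a atTop atTop) :
    ∃ E : Set ℝ, MeasurableSet E ∧
      (∀ x : ℝ, ¬ (Set.range (fun n : ℕ => x + a n) ⊆ E)) ∧
      Set.Iic (0 : ℝ) ⊆ E ∧
      Tendsto (fun m : ℤ => (volume (E ∩ Set.Icc (m : ℝ) ((m : ℝ) + 1))).toReal)
        atTop (nhds 1) := by
  classical
  set b : ℕ → ℝ := fun i => a (nseq a htop i) with hbdef
  have hbstep : ∀ i, b i + Hsum (i + 1) + Hsum (i + 2) + 2 ≤ b (i + 1) :=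
    fun i => nseq_succ_spec a htop i
  have hbge : ∀ i, Hsum (i + 1) + 2 ≤ b i := by
    intro i
    induction i with
    | zero => exact nseq_zero_spec a htop
    | succ i ih =>
        have h1 := hbstep i
        have h2 := Hsum_nonneg (i + 1)
        linarith
  set R : ℕ → Set ℝ := fun i =>
    Set.Icc (b i - Hsum (i + 1)) (b i - Hsum i) ∪
      Set.Icc (b i + Hsum i) (b i + Hsum (i + 1)) with hRdef
  set U : Set ℝ := ⋃ i, R i with hUdef
  have hmeasR : ∀ i, MeasurableSet (R i) := fun i =>
    measurableSet_Icc.union measurableSet_Icc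
  have hmeasU : MeasurableSet U := MeasurableSet.iUnion hmeasR
  have Rsub : ∀ i, R i ⊆ Set.Icc (b i - Hsum (i + 1)) (b i + Hsum (i + 1)) := by
    intro i y hy
    have h1 := Hsum_nonneg i
    have h2 := Hsum_nonneg (i + 1)
    have h3 : Hsum i ≤ Hsum (i + 1) := Hsum_mono (Nat.le_succ i)
    rcases hy with ⟨ha', hb'⟩ | ⟨ha', hb'⟩ <;> exact ⟨by linarith, by linarith⟩
  have sep : ∀ i j, j < i → b j + Hsum (j + 1) + 2 ≤ b i - Hsum (i + 1) := by
    intro i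
    induction i with
    | zero => exact fun j h => absurd h (Nat.not_lt_zero j)
    | succ i ih =>
        intro j hj
        rcases Nat.lt_succ_iff_lt_or_eq.mp hj with hj' | rfl
        · have h1 := ih j hj'
          have h2 := hbstep i
          have h3 := Hsum_nonneg (i + 1)
          linarith
        · have h2 := hbstep j
          linarith
  refine ⟨Uᶜ, hmeasU.compl, ?_, ?_, ?_⟩
  · -- no translate is contained in E
    intro x hx
    have key : ∃ i, x + b i ∈ R i := by
      rcases le_total 0 x with hx0 | hx0
      · obtain ⟨i, h1, h2⟩ := Hsum_cover hx0
        exact ⟨i, Or.inr ⟨by linarith, by linarith⟩⟩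
      · obtain ⟨i, h1, h2⟩ := Hsum_cover (neg_nonneg.2 hx0)
        exact ⟨i, Or.inl ⟨by linarith, by linarith⟩⟩
    obtain ⟨i, hi⟩ := key
    have hmem : x + a (nseq a htop i) ∈ Set.range (fun n : ℕ => x + a n) :=
      ⟨nseq a htop i, rfl⟩
    have hE := hx hmem
    exact hE (Set.mem_iUnion.2 ⟨i, hi⟩)
  · -- Iic 0 ⊆ E
    intro y hy
    simp only [Set.mem_compl_iff, hUdef, Set.mem_iUnion, not_exists]
    intro i hyR
    have hy0 : y ≤ 0 := Set.mem_Iic.mp hy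
    have hge := hbge i
    have h1 := Hsum_nonneg i
    have h2 := Hsum_nonneg (i + 1)
    rcases hyR with ⟨ha', _⟩ | ⟨ha', _⟩ <;> linarith
  · -- density
    have hIccvol : ∀ m : ℤ, volume (Set.Icc (m : ℝ) ((m : ℝ) + 1)) = 1 := by
      intro m
      rw [Real.volume_Icc]
      simp
    have hveq : ∀ m : ℤ, (volume (Uᶜ ∩ Set.Icc (m : ℝ) ((m : ℝ) + 1))).toReal
        = 1 - (volume (Set.Icc (m : ℝ) ((m : ℝ) + 1) ∩ U)).toReal := by
      intro m
      have hsub : Set.Icc (m : ℝ) ((m : ℝ) + 1) ∩ U ⊆ Set.Icc (m : ℝ) ((m : ℝ) + 1) :=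
        Set.inter_subset_left
      have hle1 : volume (Set.Icc (m : ℝ) ((m : ℝ) + 1) ∩ U) ≤ 1 :=
        le_of_le_of_eq (measure_mono hsub) (hIccvol m)
      have hfin : volume (Set.Icc (m : ℝ) ((m : ℝ) + 1) ∩ U) ≠ ⊤ :=
        ne_top_of_le_ne_top ENNReal.one_ne_top hle1
      have hset : Uᶜ ∩ Set.Icc (m : ℝ) ((m : ℝ) + 1)
          = Set.Icc (m : ℝ) ((m : ℝ) + 1) \ (Set.Icc (m : ℝ) ((m : ℝ) + 1) ∩ U) := by
        ext y
        simp only [Set.mem_inter_iff, Set.mem_compl_iff, Set.mem_diff]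
        tauto
      rw [hset, measure_diff hsub (measurableSet_Icc.inter hmeasU).nullMeasurableSet hfin,
        hIccvol m, ENNReal.toReal_sub_of_le hle1 ENNReal.one_ne_top, ENNReal.toReal_one]
    have hv0 : Tendsto (fun m : ℤ =>
        (volume (Set.Icc (m : ℝ) ((m : ℝ) + 1) ∩ U)).toReal) atTop (nhds 0) := by
      rw [Metric.tendsto_atTop]
      intro ε hε
      obtain ⟨I, hI⟩ := exists_nat_one_div_lt (half_pos hε)
      obtain ⟨M, hM⟩ := exists_int_gt (b I + Hsum (I + 1) + 1)
      refine ⟨M, fun m hm => ?_⟩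
      rw [Real.dist_eq, sub_zero, abs_of_nonneg ENNReal.toReal_nonneg]
      have hmM : (M : ℝ) ≤ (m : ℝ) := by exact_mod_cast hm
      rcases Set.eq_empty_or_nonempty (Set.Icc (m : ℝ) ((m : ℝ) + 1) ∩ U) with hemp | ⟨y₀, hy₀⟩
      · rw [hemp, measure_empty]
        simpa using hε
      · obtain ⟨i₀, hy₀R⟩ := Set.mem_iUnion.mp hy₀.2
        have hy₀Icc := hy₀.1
        have hiI : I < i₀ := by
          by_contra hle
          push_neg at hle
          have hy1 : y₀ ≤ b i₀ + Hsum (i₀ + 1) := (Rsub i₀ hy₀R).2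
          have hub : b i₀ + Hsum (i₀ + 1) ≤ b I + Hsum (I + 1) := by
            rcases lt_or_eq_of_le hle with h | h
            · have hs := sep I i₀ h
              have := Hsum_nonneg (I + 1)
              have := Hsum_nonneg (i₀ + 1)
              linarith
            · rw [h]
          have hmy : (M : ℝ) ≤ y₀ := le_trans hmM hy₀Icc.1
          linarith
        have hsubR : Set.Icc (m : ℝ) ((m : ℝ) + 1) ∩ U ⊆ R i₀ := by
          rintro y ⟨hyIcc, hyU⟩
          obtain ⟨j, hyR⟩ := Set.mem_iUnion.mp hyU
          rcases lt_trichotomy j i₀ with h | h | h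
          · exfalso
            have h1 : y ≤ b j + Hsum (j + 1) := (Rsub j hyR).2
            have h2 : b i₀ - Hsum (i₀ + 1) ≤ y₀ := (Rsub i₀ hy₀R).1
            have hs := sep i₀ j h
            have := hyIcc.1
            have := hy₀Icc.2
            linarith
          · rwa [h] at hyR
          · exfalso
            have h1 : b j - Hsum (j + 1) ≤ y := (Rsub j hyR).1
            have h2 : y₀ ≤ b i₀ + Hsum (i₀ + 1) := (Rsub i₀ hy₀R).2
            have hs := sep j i₀ h
            have := hyIcc.2
            have := hy₀Icc.1
            linarith
        have hvol : volume (R i₀) ≤ ENNReal.ofReal (2 / ((i₀ : ℝ) + 1)) := by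
          refine le_trans (measure_union_le _ _) ?_
          rw [Real.volume_Icc, Real.volume_Icc]
          have e1 : (b i₀ - Hsum i₀) - (b i₀ - Hsum (i₀ + 1)) = 1 / ((i₀ : ℝ) + 1) := by
            rw [Hsum_succ]; ring
          have e2 : (b i₀ + Hsum (i₀ + 1)) - (b i₀ + Hsum i₀) = 1 / ((i₀ : ℝ) + 1) := by
            rw [Hsum_succ]; ring
          rw [e1, e2, ← ENNReal.ofReal_add (by positivity) (by positivity)]
          apply ENNReal.ofReal_le_ofReal
          rw [← add_div]
          norm_num
        calc (volume (Set.Icc (m : ℝ) ((m : ℝ) + 1) ∩ U)).toReal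
            ≤ (ENNReal.ofReal (2 / ((i₀ : ℝ) + 1))).toReal :=
              ENNReal.toReal_mono ENNReal.ofReal_ne_top
                (le_trans (measure_mono hsubR) hvol)
          _ = 2 / ((i₀ : ℝ) + 1) := ENNReal.toReal_ofReal (by positivity)
          _ < ε := by
              have hcast : (I : ℝ) + 1 ≤ (i₀ : ℝ) + 1 := by
                have : (I : ℝ) ≤ (i₀ : ℝ) := by exact_mod_cast hiI.le
                linarith
              have hpos : (0:ℝ) < (I : ℝ) + 1 := by positivity
              have hdiv : 2 / ((i₀ : ℝ) + 1) ≤ 2 / ((I : ℝ) + 1) := by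
                gcongr
              have : 2 / ((I : ℝ) + 1) = 2 * (1 / ((I : ℝ) + 1)) := by ring
              linarith
    have hfinal : Tendsto (fun m : ℤ =>
        1 - (volume (Set.Icc (m : ℝ) ((m : ℝ) + 1) ∩ U)).toReal) atTop (nhds 1) := by
      simpa using tendsto_const_nhds.sub hv0
    exact hfinal.congr fun m => (hveq m).symm
end

section
/- Let A = {a_n : n ∈ ℕ} be a real sequence of class (A). For all real numbers 0 < a < b and every p with 0 ≤ p < 1, there exists a Lebesgue measurable set E ⊆ ℝ such that |E ∩ [m, m+1]| ≥ p for every integer m ∈ ℤ, but E contains no affine copy of A with scale in [a, b]; that is, for every x ∈ ℝ and every t ∈ [a, b] the set {x + t·a_n : n ∈ ℕ} is not contained in E. -/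
open MeasureTheory Filter Set

namespace LargeNoCopy

noncomputable section

/-- Base probability measure: uniform on `[0,2]`. -/
def mu0 : Measure ℝ := (2⁻¹ : ENNReal) • (volume.restrict (Set.Icc (0:ℝ) 2))

lemma mu0_apply {s : Set ℝ} (hs : MeasurableSet s) :
    mu0 s = 2⁻¹ * volume (s ∩ Set.Icc (0:ℝ) 2) := by
  simp [mu0, Measure.restrict_apply hs]

instance : IsProbabilityMeasure mu0 := by
  constructor
  rw [mu0_apply MeasurableSet.univ, Set.univ_inter, Real.volume_Icc]
  norm_num
  exact ENNReal.inv_mul_cancel (by norm_num) (by norm_num)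

lemma mu0_Icc {α β : ℝ} (h : Set.Icc α β ⊆ Set.Icc (0:ℝ) 2) :
    mu0 (Set.Icc α β) = 2⁻¹ * ENNReal.ofReal (β - α) := by
  rw [mu0_apply measurableSet_Icc, Set.inter_eq_left.mpr h, Real.volume_Icc]

/-- evaluation with default, to avoid dependent membership proofs. -/
def evx (K : Finset ℤ) (k : ℤ) (ω : K → ℝ) : ℝ :=
  if h : k ∈ K then ω ⟨k, h⟩ else 0

/-- Measure of a "cylinder of misses" is at most `β' ^ Rn`. -/
lemma cylinder_le (K : Finset ℤ) (Rn : ℕ) (kk : ℕ → ℤ)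
    (hinj : ∀ r r', r < Rn → r' < Rn → kk r = kk r' → r = r')
    (hmem : ∀ r, r < Rn → kk r ∈ K) (Ts : ℕ → Set ℝ)
    (β' : ENNReal) (hβ : ∀ r, r < Rn → mu0 ((Ts r)ᶜ) ≤ β') :
    Measure.pi (fun _ : K => mu0) {ω : K → ℝ | ∀ r, r < Rn → evx K (kk r) ω ∈ (Ts r)ᶜ}
      ≤ β' ^ Rn := by
  classical
  set s : K → Set ℝ :=
    fun i => ⋂ r ∈ (Finset.range Rn).filter (fun r => kk r = (i:ℤ)), (Ts r)ᶜ with hs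
  have hset : {ω : K → ℝ | ∀ r, r < Rn → evx K (kk r) ω ∈ (Ts r)ᶜ} = Set.pi Set.univ s := by
    ext ω
    simp only [Set.mem_setOf_eq, Set.mem_pi, Set.mem_univ, forall_true_left, hs,
      Set.mem_iInter, Finset.mem_filter, Finset.mem_range]
    constructor
    · rintro h i r ⟨hrR, hkr⟩
      have hh := h r hrR
      rw [evx, dif_pos (hmem r hrR)] at hh
      have : (⟨kk r, hmem r hrR⟩ : K) = i := Subtype.ext hkr
      rwa [this] at hh
    · intro h r hrR
      rw [evx, dif_pos (hmem r hrR)]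
      exact h ⟨kk r, hmem r hrR⟩ r ⟨hrR, rfl⟩
  rw [hset, Measure.pi_pi]
  set Img : Finset K :=
    (Finset.range Rn).attach.image
      (fun r => (⟨kk r.1, hmem r.1 (Finset.mem_range.mp r.2)⟩ : K)) with hImg
  have hcard : Img.card = Rn := by
    rw [hImg, Finset.card_image_of_injOn, Finset.card_attach, Finset.card_range]
    intro r hr r' hr' hEq
    have h1 : kk r.1 = kk r'.1 := congrArg Subtype.val hEq
    exact Subtype.ext (hinj r.1 r'.1 (Finset.mem_range.mp r.2) (Finset.mem_range.mp r'.2) h1)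
  calc ∏ i, mu0 (s i)
      = (∏ i ∈ Img, mu0 (s i)) * (∏ i ∈ Imgᶜ, mu0 (s i)) :=
        (Finset.prod_mul_prod_compl _ _).symm
    _ ≤ (∏ _i ∈ Img, β') * 1 := by
        refine mul_le_mul' (Finset.prod_le_prod' ?_) (Finset.prod_le_one (fun _ _ => zero_le) (fun _ _ => prob_le_one))
        intro i hi
        rw [hImg] at hi
        obtain ⟨r, hr, hri⟩ := Finset.mem_image.mp hi
        have hrR : r.1 < Rn := Finset.mem_range.mp r.2
        have hsub : s i ⊆ (Ts r.1)ᶜ := by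
          intro ω hω
          have := Set.mem_iInter₂.mp hω r.1
          exact this (Finset.mem_filter.mpr ⟨Finset.mem_range.mpr hrR, by
            rw [← hri]⟩)
        exact le_trans (measure_mono hsub) (hβ r.1 hrR)
    _ = β' ^ Rn := by rw [Finset.prod_const, hcard, mul_one]

/-- geometric-type bound for targets. -/
lemma sum_tgt_le (T : Finset ℤ) :
    ∑ m ∈ T, (1/16 : ℝ) * (1/4 : ℝ) ^ m.natAbs ≤ 1/4 := by
  classical
  set ι : ℤ → ℕ := fun m => 2 * m.natAbs + (if 0 ≤ m then 0 else 1) with hι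
  have hinj : Function.Injective ι := by
    intro m m' h
    simp only [hι] at h
    split_ifs at h <;> omega
  have hterm : ∀ m : ℤ, (1/16 : ℝ) * (1/4 : ℝ) ^ m.natAbs ≤ (1/8) * (1/2 : ℝ) ^ (ι m) := by
    intro m
    have h1 : ((1:ℝ)/4) ^ m.natAbs = ((1:ℝ)/2) ^ (2 * m.natAbs) := by
      rw [pow_mul]; norm_num
    have h2 : ι m ≤ 2 * m.natAbs + 1 := by simp only [hι]; split_ifs <;> omega
    have h3 : ((1:ℝ)/2) ^ (2 * m.natAbs + 1) ≤ ((1:ℝ)/2) ^ (ι m) :=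
      pow_le_pow_of_le_one (by norm_num) (by norm_num) h2
    rw [h1]
    calc (1/16 : ℝ) * ((1:ℝ)/2) ^ (2 * m.natAbs)
        = (1/8 : ℝ) * ((1:ℝ)/2) ^ (2 * m.natAbs + 1) := by ring
      _ ≤ (1/8 : ℝ) * ((1:ℝ)/2) ^ (ι m) := by nlinarith [h3]
  calc ∑ m ∈ T, (1/16 : ℝ) * (1/4 : ℝ) ^ m.natAbs
      ≤ ∑ m ∈ T, (1/8 : ℝ) * ((1:ℝ)/2) ^ (ι m) := Finset.sum_le_sum fun m _ => hterm m
    _ = (1/8 : ℝ) * ∑ m ∈ T, ((1:ℝ)/2) ^ (ι m) := by rw [Finset.mul_sum]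
    _ = (1/8 : ℝ) * ∑ n ∈ T.image ι, ((1:ℝ)/2) ^ n := by
        rw [Finset.sum_image (fun x _ y _ h => hinj h)]
    _ ≤ (1/8 : ℝ) * ∑ n ∈ Finset.range ((T.image ι).sup id + 1), ((1:ℝ)/2) ^ n := by
        refine mul_le_mul_of_nonneg_left ?_ (by norm_num)
        refine Finset.sum_le_sum_of_subset_of_nonneg ?_ (fun n _ _ => by positivity)
        intro n hn
        exact Finset.mem_range.mpr (Nat.lt_succ_of_le (Finset.le_sup (f := id) hn))
    _ ≤ (1/8 : ℝ) * 2 := by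
        refine mul_le_mul_of_nonneg_left ?_ (by norm_num)
        rw [geom_sum_eq (by norm_num : ((1:ℝ)/2) ≠ 1)]
        rw [div_le_iff_of_neg (by norm_num : ((1:ℝ)/2 - 1) < 0)]
        have : (0:ℝ) ≤ ((1:ℝ)/2) ^ ((T.image ι).sup id + 1) := by positivity
        linarith
    _ = 1/4 := by norm_num

/-- All data for the construction, with the choice of the number of "chances"
`R m` per unit cell `m` already made. -/
structure Cfg where
  aseq : ℕ → ℝ
  a : ℝ
  b : ℝ
  ε : ℝ
  ha : 0 < a
  hab : a ≤ b
  hε0 : 0 < ε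
  hε1 : ε ≤ 1/4
  h0 : aseq 0 = 0
  hgap : ∀ n, 1 ≤ aseq (n+1) - aseq n
  s0 : ℕ
  hs0 : 3 ≤ a * s0
  R : ℤ → ℕ
  hR1 : ∀ m, 1 ≤ R m
  hRle : ∀ m : ℤ,
    ((b - a + 3) * (4 * (1 + aseq (R m * s0))) / ε)^2 * (1 - ε/4)^(R m)
      ≤ (1/16) * (1/4)^(m.natAbs)

namespace Cfg

variable (c : Cfg)

lemma aseq_add : ∀ n k : ℕ, c.aseq n + k ≤ c.aseq (n + k) := by
  intro n k
  induction k with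
  | zero => simp
  | succ k ih =>
    have hg := c.hgap (n + k)
    have h2 : c.aseq (n + (k+1)) = c.aseq ((n + k) + 1) := rfl
    push_cast
    push_cast at ih
    rw [h2]
    linarith

lemma aseq_mono : Monotone c.aseq := by
  refine monotone_nat_of_le_succ fun n => ?_
  have := c.hgap n
  linarith

lemma le_aseq (n : ℕ) : (n : ℝ) ≤ c.aseq n := by
  have := c.aseq_add 0 n
  rw [c.h0, zero_add, zero_add] at this
  exact this

lemma aseq_nonneg (n : ℕ) : 0 ≤ c.aseq n :=
  le_trans (by positivity) (c.le_aseq n)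

lemma s0_pos : 0 < c.s0 := by
  rcases Nat.eq_zero_or_pos c.s0 with h | h
  · exfalso
    have h3 := c.hs0
    rw [h] at h3
    push_cast at h3
    linarith
  · exact h

/-- `A m` : the largest sequence element used for cell `m`. -/
def A (m : ℤ) : ℝ := c.aseq (c.R m * c.s0)

lemma one_le_A (m : ℤ) : 1 ≤ c.A m := by
  have h1 : (1:ℕ) ≤ c.R m * c.s0 := Nat.one_le_iff_ne_zero.mpr
    (Nat.mul_ne_zero (Nat.one_le_iff_ne_zero.mp (c.hR1 m)) (Nat.pos_iff_ne_zero.mp c.s0_pos))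
  calc (1:ℝ) ≤ (c.R m * c.s0 : ℕ) := by exact_mod_cast h1
    _ ≤ c.aseq (c.R m * c.s0) := c.le_aseq _
  
/-- grid spacing for cell `m`. -/
def δ (m : ℤ) : ℝ := c.ε / (4 * (1 + c.A m))

lemma δ_pos (m : ℤ) : 0 < c.δ m := by
  have := c.one_le_A m
  have := c.hε0
  unfold δ
  positivity

lemma δ_le_one (m : ℤ) : c.δ m ≤ 1 := by
  have hA := c.one_le_A m
  have h1 : c.δ m ≤ c.ε / 4 := by
    unfold δ
    apply div_le_div_of_nonneg_left c.hε0.le (by norm_num)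
    linarith
  linarith [c.hε1]

lemma δ_mul (m : ℤ) : c.δ m * (1 + c.A m) = c.ε / 4 := by
  have hA := c.one_le_A m
  unfold δ
  field_simp

def I (m : ℤ) : ℕ := ⌈1 / c.δ m⌉₊
def J (m : ℤ) : ℕ := ⌈(c.b - c.a) / c.δ m⌉₊
def xg (m : ℤ) (i : ℕ) : ℝ := m + i * c.δ m
def tg (m : ℤ) (j : ℕ) : ℝ := c.a + j * c.δ m
def idx (r : ℕ) : ℕ := (r+1) * c.s0
def y (m : ℤ) (i j r : ℕ) : ℝ := c.xg m i + c.tg m j * c.aseq (c.idx r)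
def κ (m : ℤ) (i j r : ℕ) : ℤ := ⌊c.y m i j r⌋ - 1
def T (m : ℤ) (i j r : ℕ) : Set ℝ :=
  Set.Icc (c.y m i j r - (c.κ m i j r : ℝ) - 3*c.ε/4) (c.y m i j r - (c.κ m i j r : ℝ))

lemma tg_ge (m : ℤ) (j : ℕ) : c.a ≤ c.tg m j := by
  have := c.δ_pos m
  unfold tg
  have : (0:ℝ) ≤ j * c.δ m := by positivity
  linarith

lemma y_gap (m : ℤ) (i j r : ℕ) : c.y m i j r + 3 ≤ c.y m i j (r+1) := by
  have hgap : c.aseq (c.idx r) + c.s0 ≤ c.aseq (c.idx (r+1)) := by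
    have h := c.aseq_add (c.idx r) c.s0
    have : c.idx r + c.s0 = c.idx (r+1) := by unfold idx; ring
    rwa [this] at h
  have htg : c.a ≤ c.tg m j := c.tg_ge m j
  have hs : 3 ≤ c.a * c.s0 := c.hs0
  have h3 : 3 ≤ c.tg m j * c.s0 := by
    calc (3:ℝ) ≤ c.a * c.s0 := hs
      _ ≤ c.tg m j * c.s0 := by
          apply mul_le_mul_of_nonneg_right htg
          positivity
  have h4 : c.tg m j * c.aseq (c.idx r) + c.tg m j * c.s0 ≤ c.tg m j * c.aseq (c.idx (r+1)) := by
    have := mul_le_mul_of_nonneg_left hgap (le_trans c.ha.le htg)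
    linarith [this, mul_add (c.tg m j) (c.aseq (c.idx r)) (c.s0 : ℝ)]
  unfold y
  linarith

lemma κ_strictMono (m : ℤ) (i j : ℕ) : StrictMono (fun r => c.κ m i j r) := by
  apply strictMono_nat_of_lt_succ
  intro r
  have h := c.y_gap m i j r
  unfold κ
  have h1 : ⌊c.y m i j r⌋ + 3 ≤ ⌊c.y m i j (r+1)⌋ := by
    have h2 : ⌊c.y m i j r + (3:ℤ)⌋ ≤ ⌊c.y m i j (r+1)⌋ := Int.floor_le_floor (by push_cast; linarith)
    rwa [Int.floor_add_intCast] at h2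
  omega

lemma y_sub_κ_mem (m : ℤ) (i j r : ℕ) :
    c.y m i j r - (c.κ m i j r : ℝ) ∈ Set.Ico (1:ℝ) 2 := by
  unfold κ
  have h1 : 0 ≤ Int.fract (c.y m i j r) := Int.fract_nonneg _
  have h2 : Int.fract (c.y m i j r) < 1 := Int.fract_lt_one _
  have h3 : Int.fract (c.y m i j r) = c.y m i j r - ⌊c.y m i j r⌋ := rfl
  constructor
  · push_cast
    linarith
  · push_cast
    linarith

lemma T_subset (m : ℤ) (i j r : ℕ) : c.T m i j r ⊆ Set.Icc (0:ℝ) 2 := by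
  obtain ⟨h1, h2⟩ := c.y_sub_κ_mem m i j r
  have hε := c.hε0
  have hε1 := c.hε1
  unfold T
  apply Set.Icc_subset_Icc <;> linarith

lemma mu0_T_compl_le (m : ℤ) (i j r : ℕ) :
    mu0 ((c.T m i j r)ᶜ) ≤ ENNReal.ofReal (1 - c.ε/4) := by
  have hε := c.hε0
  have hε1 := c.hε1
  have hT : mu0 (c.T m i j r) = 2⁻¹ * ENNReal.ofReal (3*c.ε/4) := by
    rw [T, mu0_Icc (c.T_subset m i j r)]
    congr 1
    ring
  have hTge : ENNReal.ofReal (c.ε/4) ≤ mu0 (c.T m i j r) := by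
    rw [hT]
    have h2 : (2⁻¹ : ENNReal) * ENNReal.ofReal (3*c.ε/4) = ENNReal.ofReal (3*c.ε/8) := by
      rw [← ENNReal.ofReal_ofNat 2, ← ENNReal.ofReal_inv_of_pos (by norm_num : (0:ℝ) < 2),
        ← ENNReal.ofReal_mul (by norm_num)]
      congr 1
      ring
    rw [h2]
    exact ENNReal.ofReal_le_ofReal (by linarith)
  have hmeas : MeasurableSet (c.T m i j r) := measurableSet_Icc
  rw [prob_compl_eq_one_sub hmeas]
  calc (1 : ENNReal) - mu0 (c.T m i j r) ≤ 1 - ENNReal.ofReal (c.ε/4) :=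
        tsub_le_tsub_left hTge 1
    _ = ENNReal.ofReal (1 - c.ε/4) := by
        rw [ENNReal.ofReal_sub 1 (by linarith), ENNReal.ofReal_one]

lemma key_real (m : ℤ) :
    ((c.I m + 1 : ℕ) : ℝ) * (((c.J m + 1 : ℕ) : ℝ) * (1 - c.ε/4)^(c.R m))
      ≤ (1/16) * (1/4)^(m.natAbs) := by
  have hδ0 := c.δ_pos m
  have hδ1 := c.δ_le_one m
  have hε0 := c.hε0
  have hε1 := c.hε1
  have hA := c.one_le_A m
  have hba : (0:ℝ) ≤ c.b - c.a := by linarith [c.hab]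
  set u : ℝ := 4 * (1 + c.A m) / c.ε with hu
  have hu0 : 0 < u := by rw [hu]; positivity
  have hδu : c.δ m = 1/u := by
    rw [hu]
    unfold δ
    rw [one_div_div]
  have h2 : 1 / c.δ m = u := by rw [hδu, one_div_one_div]
  have h3 : (1:ℝ) ≤ u := by
    rw [← h2, le_div_iff₀ hδ0]
    linarith
  have hP0 : (0:ℝ) ≤ (1 - c.ε/4)^(c.R m) := pow_nonneg (by linarith) _
  have hI : ((c.I m + 1 : ℕ) : ℝ) ≤ 3 * u := by
    push_cast
    have h1 : (c.I m : ℝ) < u + 1 := by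
      calc (c.I m : ℝ) = (⌈1 / c.δ m⌉₊ : ℝ) := by rw [I]
        _ < 1 / c.δ m + 1 := Nat.ceil_lt_add_one (by positivity)
        _ = u + 1 := by rw [h2]
    linarith
  have hJ : ((c.J m + 1 : ℕ) : ℝ) ≤ (c.b - c.a + 2) * u := by
    push_cast
    have h1 : (c.J m : ℝ) < (c.b - c.a) * u + 1 := by
      calc (c.J m : ℝ) = (⌈(c.b - c.a) / c.δ m⌉₊ : ℝ) := by rw [J]
        _ < (c.b - c.a) / c.δ m + 1 := Nat.ceil_lt_add_one (by positivity)
        _ = (c.b - c.a) * u + 1 := by rw [hδu, div_div_eq_mul_div, div_one]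
    nlinarith [h3]
  have hkey := c.hRle m
  have hQ : (c.b - c.a + 3) * (4 * (1 + c.aseq (c.R m * c.s0))) / c.ε
      = (c.b - c.a + 3) * u := by
    rw [hu]
    have : c.A m = c.aseq (c.R m * c.s0) := rfl
    rw [← this]
    ring
  rw [hQ] at hkey
  have hmid : (0:ℝ) ≤ ((c.J m + 1 : ℕ) : ℝ) * (1 - c.ε/4)^(c.R m) := by positivity
  calc ((c.I m + 1 : ℕ) : ℝ) * (((c.J m + 1 : ℕ) : ℝ) * (1 - c.ε/4)^(c.R m))
      ≤ (3*u) * (((c.b - c.a + 2)*u) * (1 - c.ε/4)^(c.R m)) := by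
        apply mul_le_mul hI (mul_le_mul_of_nonneg_right hJ hP0) hmid (by positivity)
    _ ≤ ((c.b - c.a + 3)*u)^2 * (1 - c.ε/4)^(c.R m) := by
        have e1 : (3*u) * (((c.b - c.a + 2)*u) * (1 - c.ε/4)^(c.R m))
            = (3*(c.b - c.a + 2)) * (u*u) * (1 - c.ε/4)^(c.R m) := by ring
        have e2 : ((c.b - c.a + 3)*u)^2 * (1 - c.ε/4)^(c.R m)
            = ((c.b - c.a + 3)^2) * (u*u) * (1 - c.ε/4)^(c.R m) := by ring
        rw [e1, e2]
        apply mul_le_mul_of_nonneg_right _ hP0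
        apply mul_le_mul_of_nonneg_right _ (by positivity : (0:ℝ) ≤ u*u)
        nlinarith [hba]
    _ ≤ (1/16) * (1/4)^(m.natAbs) := by
        calc ((c.b - c.a + 3)*u)^2 * (1 - c.ε/4)^(c.R m) = _ := rfl
          _ ≤ _ := hkey

lemma per_m (m : ℤ) :
    ((c.I m + 1 : ℕ) : ENNReal) * (((c.J m + 1 : ℕ) : ENNReal)
        * ENNReal.ofReal (1 - c.ε/4) ^ (c.R m))
      ≤ ENNReal.ofReal ((1/16) * (1/4)^(m.natAbs)) := by
  have h1 : (0:ℝ) ≤ 1 - c.ε/4 := by linarith [c.hε1, c.hε0]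
  rw [← ENNReal.ofReal_pow h1]
  rw [← ENNReal.ofReal_natCast (c.I m + 1), ← ENNReal.ofReal_natCast (c.J m + 1)]
  rw [← ENNReal.ofReal_mul (by positivity), ← ENNReal.ofReal_mul (by positivity)]
  exact ENNReal.ofReal_le_ofReal (c.key_real m)

lemma exists_w (M : ℕ) :
    ∃ w : ℤ → ℝ, (∀ k, w k ∈ Set.Icc (0:ℝ) 2) ∧
      ∀ m ∈ Finset.Icc (-(M:ℤ)) (M:ℤ), ∀ i ≤ c.I m, ∀ j ≤ c.J m,
        ∃ r, r < c.R m ∧ w (c.κ m i j r) ∈ c.T m i j r := by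
  classical
  set K : Finset ℤ :=
    (Finset.Icc (-(M:ℤ)) (M:ℤ)).biUnion (fun m =>
      (Finset.range (c.I m + 1)).biUnion (fun i =>
        (Finset.range (c.J m + 1)).biUnion (fun j =>
          (Finset.range (c.R m)).image (c.κ m i j)))) with hK
  have hKmem : ∀ m ∈ Finset.Icc (-(M:ℤ)) (M:ℤ), ∀ i ∈ Finset.range (c.I m + 1),
      ∀ j ∈ Finset.range (c.J m + 1), ∀ r, r < c.R m → c.κ m i j r ∈ K := by
    intro m hm i hi j hj r hr
    rw [hK]
    exact Finset.mem_biUnion.mpr ⟨m, hm, Finset.mem_biUnion.mpr ⟨i, hi,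
      Finset.mem_biUnion.mpr ⟨j, hj, Finset.mem_image.mpr
        ⟨r, Finset.mem_range.mpr hr, rfl⟩⟩⟩⟩
  set μ : Measure (K → ℝ) := Measure.pi (fun _ : K => mu0) with hμ
  have hfail : ∀ m ∈ Finset.Icc (-(M:ℤ)) (M:ℤ), ∀ i ∈ Finset.range (c.I m + 1),
      ∀ j ∈ Finset.range (c.J m + 1),
      μ {ω : K → ℝ | ∀ r, r < c.R m → evx K (c.κ m i j r) ω ∈ (c.T m i j r)ᶜ}
        ≤ ENNReal.ofReal (1 - c.ε/4) ^ (c.R m) := by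
    intro m hm i hi j hj
    refine cylinder_le K (c.R m) (c.κ m i j)
      (fun r r' _ _ hEq => (c.κ_strictMono m i j).injective hEq)
      (fun r hr => hKmem m hm i hi j hj r hr)
      (c.T m i j) _ (fun r _ => c.mu0_T_compl_le m i j r)
  set Bad : Set (K → ℝ) :=
    ⋃ m ∈ Finset.Icc (-(M:ℤ)) (M:ℤ), ⋃ i ∈ Finset.range (c.I m + 1),
      ⋃ j ∈ Finset.range (c.J m + 1),
        {ω : K → ℝ | ∀ r, r < c.R m → evx K (c.κ m i j r) ω ∈ (c.T m i j r)ᶜ} with hBad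
  have hBadlt : μ Bad < 1 := by
    have h1 : μ Bad ≤ ∑ m ∈ Finset.Icc (-(M:ℤ)) (M:ℤ), ∑ i ∈ Finset.range (c.I m + 1),
        ∑ j ∈ Finset.range (c.J m + 1), ENNReal.ofReal (1 - c.ε/4) ^ (c.R m) := by
      rw [hBad]
      refine le_trans (measure_biUnion_finset_le _ _) (Finset.sum_le_sum fun m hm => ?_)
      refine le_trans (measure_biUnion_finset_le _ _) (Finset.sum_le_sum fun i hi => ?_)
      refine le_trans (measure_biUnion_finset_le _ _) (Finset.sum_le_sum fun j hj => ?_)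
      exact hfail m hm i hi j hj
    have h2 : ∀ m ∈ Finset.Icc (-(M:ℤ)) (M:ℤ),
        (∑ i ∈ Finset.range (c.I m + 1), ∑ j ∈ Finset.range (c.J m + 1),
          ENNReal.ofReal (1 - c.ε/4) ^ (c.R m))
        ≤ ENNReal.ofReal ((1/16) * (1/4)^(m.natAbs)) := by
      intro m _
      rw [Finset.sum_const, Finset.card_range, Finset.sum_const, Finset.card_range,
        nsmul_eq_mul, nsmul_eq_mul]
      exact c.per_m m
    have h3 : μ Bad ≤ ENNReal.ofReal (1/4) := by
      refine le_trans h1 (le_trans (Finset.sum_le_sum h2) ?_)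
      rw [← ENNReal.ofReal_sum_of_nonneg (fun m _ => by positivity)]
      exact ENNReal.ofReal_le_ofReal (sum_tgt_le _)
    refine lt_of_le_of_lt h3 ?_
    rw [ENNReal.ofReal_lt_one]
    norm_num
  have hωex : ∃ ω : K → ℝ, ω ∉ Bad := by
    by_contra h
    push_neg at h
    have huniv : Bad = Set.univ := Set.eq_univ_iff_forall.mpr h
    rw [huniv, measure_univ] at hBadlt
    exact lt_irrefl _ hBadlt
  obtain ⟨ω, hω⟩ := hωex
  have hsat : ∀ m ∈ Finset.Icc (-(M:ℤ)) (M:ℤ), ∀ i ∈ Finset.range (c.I m + 1),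
      ∀ j ∈ Finset.range (c.J m + 1),
      ∃ r, r < c.R m ∧ evx K (c.κ m i j r) ω ∈ c.T m i j r := by
    intro m hm i hi j hj
    by_contra hcon
    push_neg at hcon
    apply hω
    rw [hBad]
    exact Set.mem_iUnion₂.mpr ⟨m, hm, Set.mem_iUnion₂.mpr ⟨i, hi,
      Set.mem_iUnion₂.mpr ⟨j, hj, fun r hr => hcon r hr⟩⟩⟩
  refine ⟨fun k => if h : k ∈ K then max 0 (min (ω ⟨k, h⟩) 2) else 0, ?_, ?_⟩
  · intro k
    by_cases h : k ∈ K
    · simp only [dif_pos h]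
      exact ⟨le_max_left _ _, max_le (by norm_num) (min_le_right _ _)⟩
    · simp only [dif_neg h]
      exact ⟨le_refl 0, by norm_num⟩
  · intro m hm i hi j hj
    have hi' : i ∈ Finset.range (c.I m + 1) := Finset.mem_range.mpr (Nat.lt_succ_of_le hi)
    have hj' : j ∈ Finset.range (c.J m + 1) := Finset.mem_range.mpr (Nat.lt_succ_of_le hj)
    obtain ⟨r, hr, hT⟩ := hsat m hm i hi' j hj'
    refine ⟨r, hr, ?_⟩
    have hk : c.κ m i j r ∈ K := hKmem m hm i hi' j hj' r hr
    simp only [dif_pos hk]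
    rw [evx, dif_pos hk] at hT
    obtain ⟨h0', h2'⟩ := c.T_subset m i j r hT
    rw [min_eq_left h2', max_eq_right h0']
    exact hT

lemma exists_w_global :
    ∃ w : ℤ → ℝ, (∀ k, w k ∈ Set.Icc (0:ℝ) 2) ∧
      ∀ m : ℤ, ∀ i ≤ c.I m, ∀ j ≤ c.J m,
        ∃ r, r < c.R m ∧ w (c.κ m i j r) ∈ c.T m i j r := by
  classical
  set box : Set (ℤ → ℝ) := Set.pi Set.univ (fun _ => Set.Icc (0:ℝ) 2) with hbox
  set V : ℕ → Set (ℤ → ℝ) := fun M =>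
    box ∩ ⋂ m ∈ Finset.Icc (-(M:ℤ)) (M:ℤ), ⋂ i ∈ Finset.range (c.I m + 1),
      ⋂ j ∈ Finset.range (c.J m + 1),
        ⋃ r ∈ Finset.range (c.R m), {w : ℤ → ℝ | w (c.κ m i j r) ∈ c.T m i j r} with hV
  have hVclosed : ∀ M, IsClosed (V M) := by
    intro M
    refine IsClosed.inter (isClosed_set_pi fun _ _ => isClosed_Icc) ?_
    refine isClosed_biInter fun m hm => isClosed_biInter fun i hi =>
      isClosed_biInter fun j hj => ?_
    refine Set.Finite.isClosed_biUnion (Finset.finite_toSet _) fun r hr => ?_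
    have : {w : ℤ → ℝ | w (c.κ m i j r) ∈ c.T m i j r}
        = (fun w : ℤ → ℝ => w (c.κ m i j r)) ⁻¹' (c.T m i j r) := rfl
    rw [this]
    exact IsClosed.preimage (continuous_apply (c.κ m i j r))
      (by rw [T]; exact isClosed_Icc)
  have hVdec : ∀ M, V (M+1) ⊆ V M := by
    intro M w hw
    obtain ⟨hb, hrest⟩ := hw
    refine ⟨hb, Set.mem_iInter₂.mpr fun m hm => ?_⟩
    have hm' : m ∈ Finset.Icc (-((M+1:ℕ):ℤ)) ((M+1:ℕ):ℤ) := by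
      rw [Finset.mem_Icc] at hm ⊢
      push_cast at hm ⊢
      omega
    exact Set.mem_iInter₂.mp hrest m hm'
  have hVne : ∀ M, (V M).Nonempty := by
    intro M
    obtain ⟨w, hwbox, hwsat⟩ := c.exists_w M
    refine ⟨w, fun k _ => hwbox k, ?_⟩
    refine Set.mem_iInter₂.mpr fun m hm => Set.mem_iInter₂.mpr fun i hi =>
      Set.mem_iInter₂.mpr fun j hj => ?_
    obtain ⟨r, hr, hrT⟩ := hwsat m hm i (Nat.lt_succ_iff.mp (Finset.mem_range.mp hi))
      j (Nat.lt_succ_iff.mp (Finset.mem_range.mp hj))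
    exact Set.mem_iUnion₂.mpr ⟨r, Finset.mem_range.mpr hr, hrT⟩
  have hcompact : IsCompact (V 0) :=
    (isCompact_univ_pi fun _ => isCompact_Icc).of_isClosed_subset (hVclosed 0)
      Set.inter_subset_left
  obtain ⟨w, hw⟩ := IsCompact.nonempty_iInter_of_sequence_nonempty_isCompact_isClosed
    V hVdec hVne hcompact hVclosed
  have hwV : ∀ M, w ∈ V M := fun M => Set.mem_iInter.mp hw M
  refine ⟨w, fun k => (hwV 0).1 k (Set.mem_univ k), ?_⟩
  intro m i hi j hj
  have hm : m ∈ Finset.Icc (-((m.natAbs : ℕ):ℤ)) ((m.natAbs : ℕ):ℤ) := by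
    rw [Finset.mem_Icc]
    omega
  have h1 := Set.mem_iInter₂.mp (hwV m.natAbs).2 m hm
  have h2 := Set.mem_iInter₂.mp h1 i (Finset.mem_range.mpr (Nat.lt_succ_of_le hi))
  have h3 := Set.mem_iInter₂.mp h2 j (Finset.mem_range.mpr (Nat.lt_succ_of_le hj))
  obtain ⟨r, hr, hrT⟩ := Set.mem_iUnion₂.mp h3
  exact ⟨r, Finset.mem_range.mp hr, hrT⟩

lemma master :
    ∃ E : Set ℝ, MeasurableSet E ∧
      (∀ m : ℤ, ENNReal.ofReal (1 - 4*c.ε) ≤ volume (E ∩ Set.Icc (m:ℝ) ((m:ℝ)+1))) ∧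
      (∀ x t : ℝ, c.a ≤ t → t ≤ c.b → ∃ n : ℕ, x + t * c.aseq n ∉ E) := by
  obtain ⟨w, hwbox, hwsat⟩ := c.exists_w_global
  set F : Set ℝ := ⋃ k : ℤ, Set.Icc ((k:ℝ) + w k) ((k:ℝ) + w k + c.ε) with hF
  refine ⟨Fᶜ, (MeasurableSet.iUnion fun k => measurableSet_Icc).compl, ?_, ?_⟩
  · intro m
    have hε0 := c.hε0
    have hε1 := c.hε1
    have hsub : Set.Icc (m:ℝ) ((m:ℝ)+1) ∩ F ⊆
        ⋃ k ∈ Finset.Icc (m-2) (m+1), Set.Icc ((k:ℝ) + w k) ((k:ℝ) + w k + c.ε) := by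
      rintro z ⟨hz1, hz2⟩
      obtain ⟨k, hk⟩ := Set.mem_iUnion.mp hz2
      refine Set.mem_iUnion₂.mpr ⟨k, ?_, hk⟩
      obtain ⟨ha1, ha2⟩ := hk
      obtain ⟨hb1, hb2⟩ := hz1
      have hw0 := (hwbox k).1
      have hw2 := (hwbox k).2
      rw [Finset.mem_Icc]
      constructor
      · have hlt : ((m - 2 : ℤ):ℝ) < (k:ℝ) + 1 := by push_cast; linarith
        have := Int.lt_iff_add_one_le.mpr (by exact_mod_cast hlt : (m - 2 : ℤ) < k + 1)
        omega
      · have hle : ((k:ℤ):ℝ) < ((m+1:ℤ):ℝ) + 1 := by push_cast; linarith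
        have : (k:ℤ) < (m+1:ℤ) + 1 := by exact_mod_cast hle
        omega
    have hFm : volume (Set.Icc (m:ℝ) ((m:ℝ)+1) ∩ F) ≤ ENNReal.ofReal (4*c.ε) := by
      refine le_trans (measure_mono hsub) (le_trans (measure_biUnion_finset_le _ _) ?_)
      have hcard : (Finset.Icc (m-2) (m+1)).card = 4 := by
        rw [Int.card_Icc]
        omega
      calc ∑ k ∈ Finset.Icc (m-2) (m+1), volume (Set.Icc ((k:ℝ) + w k) ((k:ℝ) + w k + c.ε))
          = ∑ _k ∈ Finset.Icc (m-2) (m+1), ENNReal.ofReal c.ε := by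
            refine Finset.sum_congr rfl fun k _ => ?_
            rw [Real.volume_Icc]
            congr 1
            ring
        _ = ENNReal.ofReal (4*c.ε) := by
            rw [Finset.sum_const, hcard, nsmul_eq_mul, ← ENNReal.ofReal_natCast 4,
              ← ENNReal.ofReal_mul (by norm_num)]
            norm_num
        _ ≤ ENNReal.ofReal (4*c.ε) := le_refl _
    have hIcc : volume (Set.Icc (m:ℝ) ((m:ℝ)+1)) = 1 := by
      rw [Real.volume_Icc]
      norm_num
    have hsplit : (1:ENNReal) ≤
        volume (Fᶜ ∩ Set.Icc (m:ℝ) ((m:ℝ)+1)) + volume (Set.Icc (m:ℝ) ((m:ℝ)+1) ∩ F) := by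
      rw [← hIcc]
      refine le_trans (measure_mono ?_) (measure_union_le _ _)
      intro z hz
      by_cases hzF : z ∈ F
      · exact Or.inr ⟨hz, hzF⟩
      · exact Or.inl ⟨hzF, hz⟩
    have h1 : (1:ENNReal) - ENNReal.ofReal (4*c.ε) ≤
        volume (Fᶜ ∩ Set.Icc (m:ℝ) ((m:ℝ)+1)) := by
      rw [tsub_le_iff_right]
      exact le_trans hsplit (add_le_add le_rfl hFm)
    calc ENNReal.ofReal (1 - 4*c.ε) = 1 - ENNReal.ofReal (4*c.ε) := by
          rw [ENNReal.ofReal_sub _ (by positivity), ENNReal.ofReal_one]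
      _ ≤ _ := h1
  · intro x t hta htb
    set m : ℤ := ⌊x⌋ with hm
    have hx1 : (m:ℝ) ≤ x := Int.floor_le x
    have hx2 : x < (m:ℝ) + 1 := Int.lt_floor_add_one x
    have hδ0 := c.δ_pos m
    set i : ℕ := ⌊(x - (m:ℝ)) / c.δ m⌋₊ with hi
    set j : ℕ := ⌊(t - c.a) / c.δ m⌋₊ with hj
    have hiI : i ≤ c.I m := by
      have h1 : (x - (m:ℝ)) / c.δ m ≤ 1 / c.δ m := by gcongr <;> linarith
      have h2 : (i:ℝ) ≤ 1 / c.δ m :=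
        le_trans (Nat.floor_le (div_nonneg (by linarith) hδ0.le)) h1
      have h4 : (1:ℝ)/c.δ m ≤ (c.I m : ℝ) := by
        rw [I]
        exact Nat.le_ceil _
      exact_mod_cast le_trans h2 h4
    have hjJ : j ≤ c.J m := by
      have h1 : (t - c.a) / c.δ m ≤ (c.b - c.a) / c.δ m := by gcongr <;> linarith
      have h2 : (j:ℝ) ≤ (c.b - c.a) / c.δ m :=
        le_trans (Nat.floor_le (div_nonneg (by linarith) hδ0.le)) h1
      have h4 : (c.b - c.a)/c.δ m ≤ (c.J m : ℝ) := by
        rw [J]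
        exact Nat.le_ceil _
      exact_mod_cast le_trans h2 h4
    obtain ⟨r, hr, hrT⟩ := hwsat m i hiI j hjJ
    have hxg1 : c.xg m i ≤ x := by
      have h8 : (i:ℝ) ≤ (x - m)/c.δ m := Nat.floor_le (div_nonneg (by linarith) hδ0.le)
      rw [le_div_iff₀ hδ0] at h8
      rw [xg]
      linarith
    have hxg2 : x ≤ c.xg m i + c.δ m := by
      have h9 : (x - m)/c.δ m < (i:ℝ) + 1 := Nat.lt_floor_add_one _
      rw [div_lt_iff₀ hδ0] at h9
      rw [xg]
      nlinarith
    have htg1 : c.tg m j ≤ t := by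
      have h8 : (j:ℝ) ≤ (t - c.a)/c.δ m := Nat.floor_le (div_nonneg (by linarith) hδ0.le)
      rw [le_div_iff₀ hδ0] at h8
      rw [tg]
      linarith
    have htg2 : t ≤ c.tg m j + c.δ m := by
      have h9 : (t - c.a)/c.δ m < (j:ℝ) + 1 := Nat.lt_floor_add_one _
      rw [div_lt_iff₀ hδ0] at h9
      rw [tg]
      nlinarith
    have han : c.aseq (c.idx r) ≤ c.A m := by
      apply c.aseq_mono
      have : r + 1 ≤ c.R m := hr
      calc c.idx r = (r+1) * c.s0 := rfl
        _ ≤ c.R m * c.s0 := Nat.mul_le_mul_right _ this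
    have han0 : 0 ≤ c.aseq (c.idx r) := c.aseq_nonneg _
    obtain ⟨hT1, hT2⟩ := hrT
    refine ⟨c.idx r, ?_⟩
    simp only [Set.mem_compl_iff, not_not]
    refine Set.mem_iUnion.mpr ⟨c.κ m i j r, ?_⟩
    rw [Set.mem_Icc]
    have hyle : c.y m i j r ≤ x + t * c.aseq (c.idx r) := by
      have hmul := mul_le_mul_of_nonneg_right htg1 han0
      rw [y]
      linarith
    have hyub : x + t * c.aseq (c.idx r) ≤ c.y m i j r + c.ε/4 := by
      have h5 : t - c.tg m j ≤ c.δ m := by linarith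
      have h6 : (t - c.tg m j) * c.aseq (c.idx r) ≤ c.δ m * c.A m :=
        mul_le_mul h5 han han0 hδ0.le
      rw [sub_mul] at h6
      have hδA := c.δ_mul m
      rw [y]
      nlinarith
    constructor
    · linarith
    · linarith


end Cfg

end

end LargeNoCopy

open LargeNoCopy

/-- **Large sets with no affine copy of a class-(A) sequence at scales in `[a, b]`.**
If `aseq` is of class (A) then for all `0 < a < b` and `0 ≤ p < 1` there is a measurable
`E ⊆ ℝ` with `|E ∩ [m, m+1]| ≥ p` for all `m ∈ ℤ`, such that for all `x ∈ ℝ` and all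
`t ∈ [a, b]` the set `{x + t * aseq n : n ∈ ℕ}` is not contained in `E`. -/
theorem large_set_no_affine_copy_bounded_scale
    (aseq : ℕ → ℝ) (h0 : aseq 0 = 0) (hgap : ∀ n : ℕ, 1 ≤ aseq (n + 1) - aseq n)
    (hgrowth : Tendsto (fun n : ℕ => Real.log (aseq n) / (n : ℝ)) atTop (nhds 0))
    (a b : ℝ) (ha : 0 < a) (hab : a < b)
    (p : ℝ) (hp0 : 0 ≤ p) (hp1 : p < 1) :
    ∃ E : Set ℝ, MeasurableSet E ∧
      (∀ m : ℤ, ENNReal.ofReal p ≤ volume (E ∩ Set.Icc (m : ℝ) ((m : ℝ) + 1))) ∧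
      (∀ x : ℝ, ∀ t ∈ Set.Icc a b,
        ¬ (Set.range (fun n : ℕ => x + t * aseq n) ⊆ E)) := by
  classical
  set ε : ℝ := (1 - p)/4 with hε
  have hε0 : 0 < ε := by rw [hε]; linarith
  have hε1 : ε ≤ 1/4 := by rw [hε]; linarith
  set s0 : ℕ := ⌈3/a⌉₊ with hs0def
  have hs0 : 3 ≤ a * s0 := by
    have h1 : 3/a ≤ (s0:ℝ) := Nat.le_ceil _
    rw [div_le_iff₀ ha] at h1
    linarith
  have hseqge : ∀ n : ℕ, (n:ℝ) ≤ aseq n := by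
    intro n
    induction n with
    | zero => simp [h0]
    | succ k ih =>
      have := hgap k
      push_cast
      linarith
  set β : ℝ := 1 - ε/4 with hβ
  have hβ0 : 0 < β := by rw [hβ]; linarith
  have hβ1 : β < 1 := by rw [hβ]; linarith
  have hlogβ : Real.log β < 0 := Real.log_neg hβ0 hβ1
  have hs0pos : 0 < s0 := Nat.ceil_pos.mpr (by positivity)
  have hs0r : (0:ℝ) < (s0:ℝ) := by exact_mod_cast hs0pos
  set cc : ℝ := (- Real.log β)/(4 * s0) with hcc
  have hcc0 : 0 < cc := by
    rw [hcc]
    apply div_pos (by linarith) (by positivity)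
  have hev1 : ∀ᶠ n : ℕ in atTop, Real.log (aseq n) / n ≤ cc :=
    hgrowth.eventually_le_const hcc0
  have hev2 : ∀ᶠ n : ℕ in atTop, aseq n ≤ Real.exp (cc * n) := by
    filter_upwards [hev1, eventually_ge_atTop 1] with n h1 h2
    have hn0 : (0:ℝ) < (n:ℝ) := by exact_mod_cast h2
    have hpos : 0 < aseq n := lt_of_lt_of_le hn0 (hseqge n)
    rw [div_le_iff₀ hn0] at h1
    calc aseq n = Real.exp (Real.log (aseq n)) := (Real.exp_log hpos).symm
      _ ≤ Real.exp (cc * n) := Real.exp_le_exp.mpr (by linarith)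
  have hcomp : Tendsto (fun R : ℕ => R * s0) atTop atTop :=
    tendsto_atTop_mono (fun R => Nat.le_mul_of_pos_right R hs0pos) tendsto_id
  have hev3 : ∀ᶠ R : ℕ in atTop, aseq (R * s0) ≤ Real.exp (cc * ((R * s0 : ℕ):ℝ)) :=
    hcomp.eventually hev2
  set D : ℝ := b - a + 3 with hD
  have hD0 : 0 < D := by rw [hD]; linarith
  set C2 : ℝ := (D * 8 / ε)^2 with hC2
  have htend : Tendsto (fun R : ℕ => (D * (4 * (1 + aseq (R * s0))) / ε)^2 * β^R)
      atTop (nhds 0) := by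
    have hb1 : Tendsto (fun R : ℕ => (Real.log β / 2) * (R:ℝ)) atTop atBot :=
      tendsto_natCast_atTop_atTop.const_mul_atTop_of_neg (by linarith)
    have hb2 : Tendsto (fun R : ℕ => C2 * Real.exp ((Real.log β / 2) * (R:ℝ)))
        atTop (nhds 0) := by
      have h := (Real.tendsto_exp_atBot.comp hb1).const_mul C2
      simpa using h
    apply squeeze_zero' ?_ ?_ hb2
    · filter_upwards with R
      positivity
    · filter_upwards [hev3, eventually_ge_atTop 1] with R hRb hR1
      have hRs1 : (1:ℝ) ≤ ((R * s0 : ℕ):ℝ) := by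
        have : 1 ≤ R * s0 := Nat.one_le_iff_ne_zero.mpr
          (Nat.mul_ne_zero (by omega) (by omega))
        exact_mod_cast this
      have ha1 : 1 ≤ aseq (R * s0) := le_trans hRs1 (hseqge _)
      have hexpos : (0:ℝ) < Real.exp (cc * ((R * s0 : ℕ):ℝ)) := Real.exp_pos _
      have ha2 : 1 + aseq (R*s0) ≤ 2 * Real.exp (cc * ((R * s0 : ℕ):ℝ)) := by
        linarith
      have hnum : D * (4 * (1 + aseq (R*s0))) / ε
          ≤ D * 8 / ε * Real.exp (cc * ((R * s0 : ℕ):ℝ)) := by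
        rw [div_mul_eq_mul_div]
        apply div_le_div_of_nonneg_right ?_ hε0.le
        nlinarith
      have h0' : (0:ℝ) ≤ D * (4 * (1 + aseq (R*s0))) / ε := by positivity
      have hstep : (D * (4 * (1 + aseq (R * s0))) / ε)^2
          ≤ C2 * Real.exp (cc * ((R * s0 : ℕ):ℝ))^2 := by
        rw [hC2]
        calc (D * (4 * (1 + aseq (R * s0))) / ε)^2
            ≤ (D * 8 / ε * Real.exp (cc * ((R * s0 : ℕ):ℝ)))^2 := pow_le_pow_left₀ h0' hnum 2
          _ = (D*8/ε)^2 * Real.exp (cc * ((R * s0 : ℕ):ℝ))^2 := by ring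
      have hβR : β^R = Real.exp (Real.log β * R) := by
        rw [mul_comm, Real.exp_nat_mul, Real.exp_log hβ0]
      have hccval : cc * ((R * s0 : ℕ):ℝ) = (- Real.log β / 4) * R := by
        rw [hcc]
        push_cast
        field_simp
      have hexps : Real.exp (cc * ((R * s0 : ℕ):ℝ))^2 * Real.exp (Real.log β * R)
          = Real.exp ((Real.log β/2) * (R:ℝ)) := by
        rw [hccval]
        rw [sq, ← Real.exp_add, ← Real.exp_add]
        congr 1
        ring
      calc (D * (4 * (1 + aseq (R * s0))) / ε)^2 * β^R
          ≤ (C2 * Real.exp (cc * ((R * s0 : ℕ):ℝ))^2) * β^R :=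
            mul_le_mul_of_nonneg_right hstep (pow_nonneg hβ0.le R)
        _ = C2 * Real.exp ((Real.log β/2) * (R:ℝ)) := by
            rw [hβR, mul_assoc, hexps]
  have hRex : ∀ m : ℤ, ∃ Rm : ℕ, 1 ≤ Rm ∧
      ((b - a + 3) * (4 * (1 + aseq (Rm * s0))) / ε)^2 * (1 - ε/4)^Rm
        ≤ (1/16)*((1:ℝ)/4)^(m.natAbs) := by
    intro m
    have hpos : (0:ℝ) < (1/16)*((1:ℝ)/4)^(m.natAbs) := by positivity
    have h1 := htend.eventually_le_const hpos
    obtain ⟨Rm, hRm1, hRm2⟩ := (h1.and (eventually_ge_atTop 1)).exists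
    refine ⟨Rm, hRm2, ?_⟩
    rw [← hD, ← hβ]
    exact hRm1
  choose Rf hRf1 hRf2 using hRex
  set c : Cfg := ⟨aseq, a, b, ε, ha, hab.le, hε0, hε1, h0, hgap, s0, hs0, Rf, hRf1, hRf2⟩
    with hc
  obtain ⟨E, hEmeas, hEvol, hEcopy⟩ := c.master
  refine ⟨E, hEmeas, ?_, ?_⟩
  · intro m
    have hv := hEvol m
    have hce : c.ε = ε := rfl
    rw [hce] at hv
    have h4 : 1 - 4*ε = p := by rw [hε]; ring
    rwa [h4] at hv
  · intro x t ht hsub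
    obtain ⟨ht1, ht2⟩ := ht
    obtain ⟨n, hn⟩ := hEcopy x t ht1 ht2
    exact hn (hsub (Set.mem_range_self n))
end
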